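/- For n ≥ 5, R(K̂_n, K̂_n) ≤ 4n − 6, where K̂_n = K_1 + P_{n−1} is the kipas on n vertices. -/

import Mathlib

set_option linter.unusedSectionVars false
set_option maxHeartbeats 2000000


open SimpleGraph

/-- `H` is contained in `G` as a subgraph. -/
def Contains {α β : Type*} (G : SimpleGraph α) (H : SimpleGraph β) : Prop :=
  ∃ f : H →g G, Function.Injective f

/-- Every red/blue coloring of `K_N` (red = `C`, blue = `Cᶜ`) has a red `G` or blue `H`. -/
def RamseyProp {α β : Type*} (N : ℕ) (G : SimpleGraph α) (H : SimpleGraph β) : Prop :=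
  ∀ C : SimpleGraph (Fin N), Contains C G ∨ Contains Cᶜ H

/-- The Ramsey number `R(G, H)`. -/
noncomputable def ramseyNumber {α β : Type*} (G : SimpleGraph α) (H : SimpleGraph β) : ℕ :=
  sInf {N | RamseyProp N G H}

/-- The join `G + H`: disjoint union plus all edges in between. -/
def graphJoin {α β : Type*} (G : SimpleGraph α) (H : SimpleGraph β) : SimpleGraph (α ⊕ β) :=
  SimpleGraph.fromRel (fun x y =>
    match x, y with
    | Sum.inl a, Sum.inl b => G.Adj a b
    | Sum.inr a, Sum.inr b => H.Adj a b
    | _, _ => True)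

/-- The wheel `W_n = K_1 + C_{n-1}` on `n` vertices. -/
def wheel (n : ℕ) : SimpleGraph (Fin 1 ⊕ Fin (n - 1)) :=
  graphJoin ⊥ (SimpleGraph.cycleGraph (n - 1))

/-- A perfect matching `k • K_2` on `2k` vertices. -/
def matching (k : ℕ) : SimpleGraph (Fin k × Fin 2) :=
  SimpleGraph.fromRel (fun x y => x.1 = y.1)

/-- The fan `F_k = K_1 + k • K_2`. -/
def fan (k : ℕ) : SimpleGraph (Fin 1 ⊕ Fin k × Fin 2) :=
  graphJoin ⊥ (matching k)

/-- The kipas `K̂_n = K_1 + P_{n-1}` on `n` vertices. -/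
def kipas (n : ℕ) : SimpleGraph (Fin 1 ⊕ Fin (n - 1)) :=
  graphJoin ⊥ (SimpleGraph.pathGraph (n - 1))

/-- The blow-up `G[K_2]`: each vertex replaced by an adjacent pair; vertices in
different pairs adjacent iff the original vertices are adjacent. -/
def blowUp {α : Type*} (G : SimpleGraph α) : SimpleGraph (α × Fin 2) :=
  SimpleGraph.fromRel (fun x y => x.1 = y.1 ∨ G.Adj x.1 y.1)


section EG
variable {V : Type*} [DecidableEq V] [Fintype V]
variable (A : V → V → Prop)

def HasPathOn (S : Finset V) (k : ℕ) : Prop :=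
  ∃ p : ℕ → V, (∀ i < k, p i ∈ S) ∧ (∀ i j, i < j → j < k → p i ≠ p j) ∧
    (∀ i, i + 1 < k → A (p i) (p (i + 1)))

open Classical in
noncomputable def degIn (S : Finset V) (x : V) : ℕ :=
  (S.filter (fun y => A x y)).card

variable {A}

lemma hasPathOn_mono {S : Finset V} {j k : ℕ} (h : HasPathOn A S k) (hj : j ≤ k) :
    HasPathOn A S j := by
  obtain ⟨p, h1, h2, h3⟩ := h
  exact ⟨p, fun i hi => h1 i (lt_of_lt_of_le hi hj),
    fun i i' hi hi' => h2 i i' hi (lt_of_lt_of_le hi' hj),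
    fun i hi => h3 i (lt_of_lt_of_le hi hj)⟩

lemma hasPathOn_subset {S T : Finset V} {k : ℕ} (hST : S ⊆ T) (h : HasPathOn A S k) :
    HasPathOn A T k := by
  obtain ⟨p, h1, h2, h3⟩ := h
  exact ⟨p, fun i hi => hST (h1 i hi), h2, h3⟩

lemma hasPathOn_card_le {S : Finset V} {k : ℕ} (h : HasPathOn A S k) : k ≤ S.card := by
  obtain ⟨p, h1, h2, _⟩ := h
  have : ((Finset.range k).image p).card = k := by
    rw [Finset.card_image_of_injOn]
    · exact Finset.card_range k
    · intro a ha b hb hab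
      simp only [Finset.mem_range, Finset.mem_coe] at ha hb
      by_contra hne
      rcases lt_or_gt_of_ne hne with h' | h'
      · exact h2 a b h' hb hab
      · exact h2 b a h' ha hab.symm
  calc k = ((Finset.range k).image p).card := this.symm
    _ ≤ S.card := Finset.card_le_card (by
        intro x hx
        simp only [Finset.mem_image, Finset.mem_range] at hx
        obtain ⟨i, hi, rfl⟩ := hx
        exact h1 i hi)

lemma dirac (hsymm : Symmetric A) (hirr : Irreflexive A) {Cs : Finset V} {k : ℕ} (hk : 2 ≤ k)
    (hconn : ∀ x ∈ Cs, ∀ y ∈ Cs,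
      Relation.ReflTransGen (fun a b => a ∈ Cs ∧ b ∈ Cs ∧ A a b) x y)
    (hdeg : ∀ x ∈ Cs, k - 1 ≤ 2 * degIn A Cs x)
    (hcard : k ≤ Cs.card) : HasPathOn A Cs k := by
  classical
  by_contra hcon
  set P : ℕ → Prop := fun m => HasPathOn A Cs m with hPdef
  set L := Nat.findGreatest P Cs.card with hLdef
  have hCs_pos : 0 < Cs.card := by omega
  obtain ⟨x₀, hx₀⟩ := Finset.card_pos.mp hCs_pos
  have hP1 : P 1 := ⟨fun _ => x₀, fun i _ => hx₀,
    fun i j hij hj => absurd hj (by omega), fun i hi => absurd hi (by omega)⟩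
  have hPL : P L := Nat.findGreatest_spec (by omega : 1 ≤ Cs.card) hP1
  have hLk : L < k := by
    by_contra h
    push_neg at h
    exact hcon (hasPathOn_mono hPL h)
  have hL1 : 1 ≤ L := Nat.le_findGreatest (show 1 ≤ Cs.card by omega) hP1
  have hmax : ¬ P (L + 1) := Nat.findGreatest_is_greatest (P := P) (n := Cs.card)
    (by rw [← hLdef]; omega) (by omega)
  obtain ⟨p, hpS, hpI, hpA⟩ := hPL
  have pNe : ∀ a b, a < L → b < L → a ≠ b → p a ≠ p b := by
    intro a b ha hb hab
    rcases lt_or_gt_of_ne hab with h | h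
    · exact hpI a b h hb
    · exact fun e => hpI b a h ha e.symm
  -- all neighbours of the endpoints lie on the path
  have hend0 : ∀ u ∈ Cs, A u (p 0) → ∃ j, j < L ∧ p j = u := by
    intro u hu hadj
    by_contra hno
    push_neg at hno
    apply hmax
    refine ⟨fun i => if i = 0 then u else p (i - 1), ?_, ?_, ?_⟩
    · intro i hi
      by_cases h0 : i = 0
      · simpa [h0] using hu
      · simp only [if_neg h0]
        exact hpS _ (by omega)
    · intro i j hij hj
      have hj0 : j ≠ 0 := by omega
      by_cases h0 : i = 0
      · subst h0
        simp only [if_pos rfl, if_neg hj0]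
        exact fun he => hno (j - 1) (by omega) he.symm
      · simp only [if_neg h0, if_neg hj0]
        exact pNe _ _ (by omega) (by omega) (by omega)
    · intro i hi
      by_cases h0 : i = 0
      · subst h0
        simpa using hadj
      · have h1 : i + 1 ≠ 0 := by omega
        simp only [if_neg h0, if_neg h1]
        have he : i + 1 - 1 = (i - 1) + 1 := by omega
        rw [he]
        exact hpA (i - 1) (by omega)
  have hendE : ∀ u ∈ Cs, A u (p (L - 1)) → ∃ j, j < L ∧ p j = u := by
    intro u hu hadj
    by_contra hno
    push_neg at hno
    apply hmax
    refine ⟨fun i => if i < L then p i else u, ?_, ?_, ?_⟩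
    · intro i hi
      by_cases h0 : i < L
      · simp only [if_pos h0]; exact hpS _ h0
      · simp only [if_neg h0]; exact hu
    · intro i j hij hj
      have hiL : i < L := by omega
      by_cases h0 : j < L
      · simp only [if_pos hiL, if_pos h0]
        exact pNe _ _ hiL h0 (by omega)
      · simp only [if_pos hiL, if_neg h0]
        exact fun he => hno i hiL he
    · intro i hi
      have hiL : i < L := by omega
      by_cases h0 : i + 1 < L
      · simp only [if_pos hiL, if_pos h0]
        exact hpA i h0
      · have hiL1 : i = L - 1 := by omega
        subst hiL1
        simp only [if_pos (show L - 1 < L by omega), if_neg h0]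
        exact hsymm hadj
  -- the two index sets
  set I := (Finset.range (L - 1)).filter (fun i => A (p (L - 1)) (p i)) with hIdef
  set J := (Finset.range (L - 1)).filter (fun i => A (p 0) (p (i + 1))) with hJdef
  have hIcard : I.card = degIn A Cs (p (L - 1)) := by
    apply Finset.card_bij (fun i _ => p i)
    · intro a ha
      simp only [hIdef, Finset.mem_filter, Finset.mem_range] at ha
      simp only [degIn, Finset.mem_filter]
      exact ⟨hpS a (by omega), ha.2⟩
    · intro a ha b hb hab
      simp only [hIdef, Finset.mem_filter, Finset.mem_range] at ha hb
      by_contra hne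
      exact pNe a b (by omega) (by omega) hne hab
    · intro b hb
      simp only [degIn, Finset.mem_filter] at hb
      obtain ⟨j, hjL, hje⟩ := hendE b hb.1 (hsymm hb.2)
      have hjne : j ≠ L - 1 := by
        intro h
        rw [h] at hje
        exact hirr _ (hje ▸ hb.2)
      exact ⟨j, by simp only [hIdef, Finset.mem_filter, Finset.mem_range]
                   exact ⟨by omega, hje ▸ hb.2⟩, hje⟩
  have hJcard : J.card = degIn A Cs (p 0) := by
    apply Finset.card_bij (fun i _ => p (i + 1))
    · intro a ha
      simp only [hJdef, Finset.mem_filter, Finset.mem_range] at ha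
      simp only [degIn, Finset.mem_filter]
      exact ⟨hpS _ (by omega), ha.2⟩
    · intro a ha b hb hab
      simp only [hJdef, Finset.mem_filter, Finset.mem_range] at ha hb
      by_contra hne
      exact pNe (a + 1) (b + 1) (by omega) (by omega) (by omega) hab
    · intro b hb
      simp only [degIn, Finset.mem_filter] at hb
      obtain ⟨j, hjL, hje⟩ := hend0 b hb.1 (hsymm hb.2)
      have hjne : j ≠ 0 := by
        intro h
        rw [h] at hje
        exact hirr _ (hje ▸ hb.2)
      refine ⟨j - 1, ?_, by rw [show j - 1 + 1 = j by omega]; exact hje⟩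
      simp only [hJdef, Finset.mem_filter, Finset.mem_range]
      rw [show j - 1 + 1 = j by omega]
      exact ⟨by omega, hje ▸ hb.2⟩
  have hdegE := hdeg _ (hpS (L - 1) (by omega))
  have hdeg0 := hdeg _ (hpS 0 (by omega))
  have hIJcard : L - 1 < I.card + J.card := by omega
  have hIJ : (I ∩ J).Nonempty := by
    rw [← Finset.card_pos]
    have hsub : I ∪ J ⊆ Finset.range (L - 1) := by
      intro x hx
      rcases Finset.mem_union.mp hx with h | h
      · exact (Finset.mem_filter.mp h).1
      · exact (Finset.mem_filter.mp h).1
    have h1 := Finset.card_le_card hsub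
    have h2 := Finset.card_union_add_card_inter I J
    rw [Finset.card_range] at h1
    omega
  obtain ⟨i, hiIJ⟩ := hIJ
  obtain ⟨hiI, hiJ⟩ := Finset.mem_inter.mp hiIJ
  simp only [hIdef, hJdef, Finset.mem_filter, Finset.mem_range] at hiI hiJ
  have hiL : i < L - 1 := hiI.1
  have hadj1 : A (p (L - 1)) (p i) := hiI.2
  have hadj2 : A (p 0) (p (i + 1)) := hiJ.2
  -- the cycle through all vertices of p
  set c : ℕ → V := fun j => if j ≤ i then p j else p (L + i - j) with hcdef
  have cmem : ∀ j, j < L → c j ∈ Cs := by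
    intro j hj
    simp only [hcdef]
    by_cases h : j ≤ i
    · simp only [if_pos h]; exact hpS j hj
    · simp only [if_neg h]; exact hpS _ (by omega)
  have cinj : ∀ a b, a < L → b < L → a ≠ b → c a ≠ c b := by
    intro a b ha hb hab
    simp only [hcdef]
    by_cases h1 : a ≤ i <;> by_cases h2 : b ≤ i
    · simp only [if_pos h1, if_pos h2]; exact pNe a b ha hb hab
    · simp only [if_pos h1, if_neg h2]; exact pNe _ _ ha (by omega) (by omega)
    · simp only [if_neg h1, if_pos h2]; exact pNe _ _ (by omega) hb (by omega)
    · simp only [if_neg h1, if_neg h2]; exact pNe _ _ (by omega) (by omega) (by omega)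
  have cstep : ∀ j, j + 1 < L → A (c j) (c (j + 1)) := by
    intro j hj
    simp only [hcdef]
    by_cases h1 : j + 1 ≤ i
    · simp only [if_pos (by omega : j ≤ i), if_pos h1]
      exact hpA j (by omega)
    · by_cases h2 : j ≤ i
      · have hji : j = i := by omega
        subst hji
        simp only [if_pos (le_refl j), if_neg (show ¬ j + 1 ≤ j by omega),
          show L + j - (j + 1) = L - 1 by omega]
        exact hsymm hadj1
      · simp only [if_neg h2, if_neg h1]
        rw [show L + i - (j + 1) = (L + i - j) - 1 by omega]
        have := hpA (L + i - j - 1) (by omega)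
        rw [show L + i - j - 1 + 1 = L + i - j by omega] at this
        exact hsymm this
  have cwrap : A (c (L - 1)) (c 0) := by
    simp only [hcdef]
    simp only [if_pos (by omega : (0:ℕ) ≤ i), if_neg (by omega : ¬ L - 1 ≤ i)]
    rw [show L + i - (L - 1) = i + 1 by omega]
    exact hsymm hadj2
  have ccyc : ∀ j, j < L → A (c j) (c ((j + 1) % L)) := by
    intro j hj
    by_cases h : j + 1 < L
    · rw [Nat.mod_eq_of_lt h]; exact cstep j h
    · have hjL : j = L - 1 := by omega
      rw [show j + 1 = L by omega, Nat.mod_self, hjL]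
      exact cwrap
  -- a vertex off the cycle
  have hoff : ∃ w ∈ Cs, ∀ j, j < L → c j ≠ w := by
    by_contra h
    push_neg at h
    have hsub : Cs ⊆ (Finset.range L).image c := by
      intro w hw
      obtain ⟨j, hj, hje⟩ := h w hw
      exact Finset.mem_image.mpr ⟨j, Finset.mem_range.mpr hj, hje⟩
    have h1 := Finset.card_le_card hsub
    have h2 := Finset.card_image_le (s := Finset.range L) (f := c)
    rw [Finset.card_range] at h2
    omega
  obtain ⟨w, hw, hwoff⟩ := hoff
  -- find a boundary edge using connectivity
  have boundary : ∀ x y : V,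
      Relation.ReflTransGen (fun a b => a ∈ Cs ∧ b ∈ Cs ∧ A a b) x y →
      (∀ j, j < L → c j ≠ x) → (∃ j, j < L ∧ c j = y) →
      ∃ a t, a ∈ Cs ∧ (∀ j, j < L → c j ≠ a) ∧ t < L ∧ A a (c t) := by
    intro x y hxy
    induction hxy with
    | refl => exact fun h1 h2 => absurd h2 (by
        push_neg
        intro j hj
        exact h1 j hj)
    | @tail b y hab hby ih =>
      intro hx hy
      by_cases hb : ∃ j, j < L ∧ c j = b
      · exact ih hx hb
      · push_neg at hb
        obtain ⟨t, htL, hct⟩ := hy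
        exact ⟨b, t, hby.1, hb, htL, hct ▸ hby.2.2⟩
  obtain ⟨a, t, haC, haoff, htL, haA⟩ :=
    boundary w (c 0) (hconn w hw (c 0) (cmem 0 (by omega)))
      (fun j hj => hwoff j hj) ⟨0, by omega, rfl⟩
  -- extend the cycle to a longer path : contradiction
  have modinj : ∀ d d', d < L → d' < L → (t + d) % L = (t + d') % L → d = d' := by
    intro d d' hd hd' he
    have h1 : d ≡ d' [MOD L] := Nat.ModEq.add_left_cancel' t he
    have := h1.eq_of_lt_of_lt hd hd'
    exact this
  apply hmax
  refine ⟨fun idx => if idx = 0 then a else c ((t + (idx - 1)) % L), ?_, ?_, ?_⟩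
  · intro idx _
    by_cases h0 : idx = 0
    · simpa [h0] using haC
    · simp only [if_neg h0]
      exact cmem _ (Nat.mod_lt _ (by omega))
  · intro idx jdx hij hj
    have hj0 : jdx ≠ 0 := by omega
    by_cases h0 : idx = 0
    · simp only [h0, if_pos rfl, if_neg hj0]
      exact fun he => haoff _ (Nat.mod_lt _ (by omega)) he.symm
    · simp only [if_neg h0, if_neg hj0]
      apply cinj _ _ (Nat.mod_lt _ (by omega)) (Nat.mod_lt _ (by omega))
      intro he
      have := modinj (idx - 1) (jdx - 1) (by omega) (by omega) he
      omega
  · intro idx hidx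
    have h1 : idx + 1 ≠ 0 := by omega
    by_cases h0 : idx = 0
    · simp only [h0, if_pos rfl, if_neg (by omega : (0:ℕ) + 1 ≠ 0)]
      rw [show 0 + 1 - 1 = 0 by omega, Nat.add_zero, Nat.mod_eq_of_lt htL]
      exact haA
    · simp only [if_neg h0, if_neg h1]
      rw [show idx + 1 - 1 = (idx - 1) + 1 by omega, ← Nat.add_assoc]
      have := ccyc ((t + (idx - 1)) % L) (Nat.mod_lt _ (by omega))
      rwa [Nat.mod_add_mod] at this

open Classical in
lemma erdosGallai_aux (hsymm : Symmetric A) (hirr : Irreflexive A) {k : ℕ} (hk : 2 ≤ k) :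
    ∀ m : ℕ, ∀ S : Finset V, S.card ≤ m → ¬ HasPathOn A S k →
      ∑ x ∈ S, degIn A S x ≤ (k - 2) * S.card := by
  intro m
  induction m with
  | zero =>
    intro S hS _
    have hS0 : S = ∅ := Finset.card_eq_zero.mp (by omega)
    subst hS0
    simp
  | succ m ih =>
    intro S hS hnp
    rcases Finset.eq_empty_or_nonempty S with hem | ⟨v₀, hv₀⟩
    · rw [hem]; simp
    have hc1 : 1 ≤ S.card := Finset.card_pos.mpr ⟨v₀, hv₀⟩
    by_cases hex : ∃ v ∈ S, 2 * degIn A S v ≤ k - 2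
    · obtain ⟨v, hv, hdv⟩ := hex
      set S' := S.erase v with hS'def
      have hsub' : S' ⊆ S := Finset.erase_subset _ _
      have hS'c : S'.card = S.card - 1 := Finset.card_erase_of_mem hv
      have hnp' : ¬ HasPathOn A S' k := fun h => hnp (hasPathOn_subset hsub' h)
      have ihS' := ih S' (by omega) hnp'
      -- degree decomposition
      have hdeg_erase : ∀ x ∈ S', degIn A S x = degIn A S' x + (if A x v then 1 else 0) := by
        intro x hx
        by_cases h : A x v
        · rw [if_pos h]
          have hvmem : v ∈ S.filter (fun y => A x y) := Finset.mem_filter.mpr ⟨hv, h⟩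
          have he : (S'.filter (fun y => A x y)) = (S.filter (fun y => A x y)).erase v := by
            rw [hS'def, Finset.filter_erase]
          simp only [degIn, he, Finset.card_erase_of_mem hvmem]
          have : 0 < (S.filter (fun y => A x y)).card := Finset.card_pos.mpr ⟨v, hvmem⟩
          omega
        · rw [if_neg h]
          have he : (S'.filter (fun y => A x y)) = (S.filter (fun y => A x y)) := by
            rw [hS'def, Finset.filter_erase, Finset.erase_eq_of_notMem]
            intro hmem
            exact h (Finset.mem_filter.mp hmem).2
          simp only [degIn, he, Nat.add_zero]
      have hcount : ∑ x ∈ S', (if A x v then 1 else 0) = degIn A S v := by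
        rw [← Finset.card_filter]
        have he : S'.filter (fun x => A x v) = S.filter (fun y => A v y) := by
          ext y
          simp only [hS'def, Finset.mem_filter, Finset.mem_erase]
          constructor
          · rintro ⟨⟨_, h1⟩, h2⟩
            exact ⟨h1, hsymm h2⟩
          · rintro ⟨h1, h2⟩
            exact ⟨⟨fun hee => hirr v (hee ▸ h2), h1⟩, hsymm h2⟩
        rw [he]
        rfl
      have key : ∑ x ∈ S, degIn A S x = (∑ x ∈ S', degIn A S' x) + 2 * degIn A S v := by
        rw [← Finset.add_sum_erase _ _ hv, ← hS'def]
        rw [Finset.sum_congr rfl hdeg_erase, Finset.sum_add_distrib, hcount]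
        omega
      rw [key]
      have hexp : (k - 2) * S.card = (k - 2) * S'.card + (k - 2) := by
        rw [hS'c, ← Nat.mul_succ]
        congr 1
        omega
      omega
    · push_neg at hex
      have hdegS : ∀ x ∈ S, k - 1 ≤ 2 * degIn A S x := by
        intro x hx
        have := hex x hx
        omega
      set r : V → V → Prop := fun a b => a ∈ S ∧ b ∈ S ∧ A a b with hrdef
      set Comp := S.filter (fun x => Relation.ReflTransGen r v₀ x) with hCompdef
      have hCsub : Comp ⊆ S := Finset.filter_subset _ _
      have hv₀C : v₀ ∈ Comp := Finset.mem_filter.mpr ⟨hv₀, Relation.ReflTransGen.refl⟩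
      have hclosed : ∀ x ∈ Comp, ∀ y ∈ S, A x y → y ∈ Comp := by
        intro x hx y hy hxy
        obtain ⟨hxS, hre⟩ := Finset.mem_filter.mp hx
        exact Finset.mem_filter.mpr ⟨hy, hre.tail ⟨hxS, hy, hxy⟩⟩
      have hdegC : ∀ x ∈ Comp, degIn A S x = degIn A Comp x := by
        intro x hx
        simp only [degIn]
        congr 1
        ext y
        simp only [Finset.mem_filter]
        exact ⟨fun ⟨h1, h2⟩ => ⟨hclosed x hx y h1 h2, h2⟩, fun ⟨h1, h2⟩ => ⟨hCsub h1, h2⟩⟩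
      have hdegR : ∀ x ∈ S, x ∉ Comp → degIn A S x = degIn A (S \ Comp) x := by
        intro x hx hxC
        simp only [degIn]
        congr 1
        ext y
        simp only [Finset.mem_filter, Finset.mem_sdiff]
        constructor
        · rintro ⟨h1, h2⟩
          refine ⟨⟨h1, fun hyC => hxC ?_⟩, h2⟩
          exact hclosed y hyC x hx (hsymm h2)
        · rintro ⟨⟨h1, _⟩, h2⟩
          exact ⟨h1, h2⟩
      have hsplit : ∑ x ∈ S, degIn A S x
          = ∑ x ∈ S \ Comp, degIn A (S \ Comp) x + ∑ x ∈ Comp, degIn A Comp x := by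
        rw [← Finset.sum_sdiff hCsub]
        congr 1
        · exact Finset.sum_congr rfl (fun x hx =>
            hdegR x (Finset.mem_sdiff.mp hx).1 (Finset.mem_sdiff.mp hx).2)
        · exact Finset.sum_congr rfl (fun x hx => hdegC x hx)
      by_cases hbig : k ≤ Comp.card
      · exfalso
        apply hnp
        apply hasPathOn_subset hCsub
        have reach' : ∀ x, Relation.ReflTransGen r v₀ x →
            Relation.ReflTransGen (fun a b => a ∈ Comp ∧ b ∈ Comp ∧ A a b) v₀ x := by
          intro x hre
          induction hre with
          | refl => exact Relation.ReflTransGen.refl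
          | tail hab hbc ihr =>
            have hbC := Finset.mem_filter.mpr ⟨hbc.1, hab⟩
            have hcC := hclosed _ hbC _ hbc.2.1 hbc.2.2
            exact ihr.tail ⟨hbC, hcC, hbc.2.2⟩
        have hsymm' : Symmetric (fun a b => a ∈ Comp ∧ b ∈ Comp ∧ A a b) :=
          fun a b h => ⟨h.2.1, h.1, hsymm h.2.2⟩
        apply dirac hsymm hirr hk ?_ ?_ hbig
        · intro x hx y hy
          exact (@Std.Symm.symm _ _ (@Relation.ReflTransGen.symmetric _ _ ⟨fun a b h => hsymm' h⟩) _ _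
            (reach' x (Finset.mem_filter.mp hx).2)).trans
            (reach' y (Finset.mem_filter.mp hy).2)
        · intro x hx
          rw [← hdegC x hx]
          exact hdegS x (hCsub hx)
      · have hCompbound : ∑ x ∈ Comp, degIn A Comp x ≤ (k - 2) * Comp.card := by
          calc ∑ x ∈ Comp, degIn A Comp x ≤ ∑ _x ∈ Comp, (k - 2) := by
                apply Finset.sum_le_sum
                intro x hx
                have hss : Comp.filter (fun y => A x y) ⊆ Comp.erase x := by
                  intro y hy
                  obtain ⟨h1, h2⟩ := Finset.mem_filter.mp hy
                  exact Finset.mem_erase.mpr ⟨fun he => hirr x (he ▸ h2), h1⟩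
                have hle := Finset.card_le_card hss
                rw [Finset.card_erase_of_mem hx] at hle
                simp only [degIn]
                omega
            _ = (k - 2) * Comp.card := by
                rw [Finset.sum_const, smul_eq_mul, mul_comm]
        have hComppos : 1 ≤ Comp.card := Finset.card_pos.mpr ⟨v₀, hv₀C⟩
        have hCcard : Comp.card ≤ S.card := Finset.card_le_card hCsub
        have hsd : (S \ Comp).card = S.card - Comp.card := Finset.card_sdiff_of_subset hCsub
        have hrest : ∑ x ∈ S \ Comp, degIn A (S \ Comp) x ≤ (k - 2) * (S \ Comp).card := by
          apply ih
          · omega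
          · exact fun h => hnp (hasPathOn_subset (Finset.sdiff_subset) h)
        rw [hsplit]
        calc ∑ x ∈ S \ Comp, degIn A (S \ Comp) x + ∑ x ∈ Comp, degIn A Comp x
            ≤ (k - 2) * (S \ Comp).card + (k - 2) * Comp.card := by omega
          _ = (k - 2) * ((S \ Comp).card + Comp.card) := by ring
          _ = (k - 2) * S.card := by rw [hsd]; congr 1; omega

lemma erdosGallai (hsymm : Symmetric A) (hirr : Irreflexive A) {k : ℕ} (hk : 2 ≤ k)
    (S : Finset V) (hnp : ¬ HasPathOn A S k) :
    ∑ x ∈ S, degIn A S x ≤ (k - 2) * S.card :=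
  erdosGallai_aux hsymm hirr hk S.card S le_rfl hnp

end EG

lemma prodBound (x y c : ℕ) (h : x + y = 2 * c + 1) : x * y ≤ c * (c + 1) := by
  rcases le_or_gt x c with hx | hx
  · have h1 : (0:ℤ) ≤ (c : ℤ) - x := by omega
    have h2 : (0:ℤ) ≤ (y : ℤ) - (c + 1) := by omega
    have h3 : (x : ℤ) + y = 2 * c + 1 := by exact_mod_cast h
    zify
    nlinarith [mul_nonneg h1 h2]
  · have h1 : (0:ℤ) ≤ (c : ℤ) - y := by omega
    have h2 : (0:ℤ) ≤ (x : ℤ) - (c + 1) := by omega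
    have h3 : (x : ℤ) + y = 2 * c + 1 := by exact_mod_cast h
    zify
    nlinarith [mul_nonneg h1 h2]

open Classical in
noncomputable def tset {V : Type*} [Fintype V] (P : V → V → V → Prop) : Finset (V × V × V) :=
  Finset.univ.filter (fun t => P t.1 t.2.1 t.2.2)

open Classical in
noncomputable def cnt {V : Type*} [Fintype V] (P : V → V → V → Prop) (u : V) : ℕ :=
  (Finset.univ.filter (fun q : V × V => P u q.1 q.2)).card

lemma card_eq_of_mem_iff {α : Type*} {s t : Finset α} (h : ∀ a, a ∈ s ↔ a ∈ t) :
    s.card = t.card := by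
  rw [Finset.ext h]

lemma tset_card {V : Type*} [Fintype V] (P : V → V → V → Prop) :
    (tset P).card = ∑ u : V, cnt P u := by
  classical
  simp only [tset, cnt, Finset.card_filter]
  rw [← Finset.univ_product_univ, Finset.sum_product]
  all_goals exact Finset.sum_congr rfl fun u _ => Finset.sum_congr rfl fun q _ => by congr

lemma tset_split {V : Type*} [Fintype V] (P Q : V → V → V → Prop) :
    (tset (fun u x y => P u x y ∧ Q u x y)).card
      + (tset (fun u x y => P u x y ∧ ¬ Q u x y)).card = (tset P).card := by
  classical
  simp only [tset, Finset.card_filter, ← Finset.sum_add_distrib]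
  refine Finset.sum_congr rfl fun t _ => ?_
  by_cases hp : P t.1 t.2.1 t.2.2 <;> by_cases hq : Q t.1 t.2.1 t.2.2 <;> simp [hp, hq]

open Classical in
lemma noMono {V : Type*} [DecidableEq V] [Fintype V] (C : SimpleGraph V) {n : ℕ} (hn : 5 ≤ n)
    (hcard : Fintype.card V = 4 * n - 6)
    (hred : ∀ (u : V) (S : Finset V), (∀ x ∈ S, C.Adj u x) →
      ¬ HasPathOn (fun a b => C.Adj a b) S (n - 1))
    (hblue : ∀ (u : V) (S : Finset V), (∀ x ∈ S, u ≠ x ∧ ¬ C.Adj u x) →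
      ¬ HasPathOn (fun a b => a ≠ b ∧ ¬ C.Adj a b) S (n - 1)) : False := by
  classical
  set R : V → V → Prop := fun x y => C.Adj x y with hRdef
  set B : V → V → Prop := fun x y => x ≠ y ∧ ¬ C.Adj x y with hBdef
  have hRs : Symmetric R := fun x y h => h.symm
  have hRi : Irreflexive R := fun x h => C.irrefl h
  have hBs : Symmetric B := fun x y h => ⟨h.1.symm, fun a => h.2 a.symm⟩
  have hBi : Irreflexive B := fun x h => h.1 rfl
  set Nr : V → Finset V := fun u => Finset.univ.filter (fun x => R u x) with hNrdef
  set Nb : V → Finset V := fun u => Finset.univ.filter (fun x => B u x) with hNbdef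
  set N : ℕ := Fintype.card V with hNdef
  -- every vertex has red degree + blue degree = N - 1
  have hsum : ∀ u, (Nr u).card + (Nb u).card = N - 1 := by
    intro u
    have hdisj : Disjoint (Nr u) (Nb u) := by
      rw [Finset.disjoint_left]
      intro x hx1 hx2
      exact (Finset.mem_filter.mp hx2).2.2 (Finset.mem_filter.mp hx1).2
    have hunion : Nr u ∪ Nb u = Finset.univ.erase u := by
      ext x
      simp only [hNrdef, hNbdef, Finset.mem_union, Finset.mem_filter, Finset.mem_erase,
        Finset.mem_univ, true_and, and_true]
      constructor
      · rintro (h | h)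
        · exact h.ne'
        · exact h.1.symm
      · intro hxu
        by_cases h : C.Adj u x
        · exact Or.inl h
        · exact Or.inr ⟨hxu.symm, h⟩
    have hcu := Finset.card_union_of_disjoint hdisj
    rw [hunion, Finset.card_erase_of_mem (Finset.mem_univ u), Finset.card_univ] at hcu
    omega
  -- the monochromatic pair sets at each apex
  set PairR : V → Finset (V × V) := fun u => ((Nr u) ×ˢ (Nr u)).filter (fun q => R q.1 q.2)
    with hPairRdef
  set PairB : V → Finset (V × V) := fun u => ((Nb u) ×ˢ (Nb u)).filter (fun q => B q.1 q.2)
    with hPairBdef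
  -- Erdős–Gallai bound for them
  have hEGr : ∀ u, (PairR u).card ≤ (n - 1 - 2) * (Nr u).card := by
    intro u
    have hnp : ¬ HasPathOn (fun a b => R a b) (Nr u) (n - 1) := by
      apply hred u
      intro x hx
      exact (Finset.mem_filter.mp hx).2
    have heg := erdosGallai hRs hRi (show 2 ≤ n - 1 by omega) (Nr u) hnp
    calc (PairR u).card = ∑ x ∈ Nr u, degIn R (Nr u) x := by
          rw [hPairRdef, Finset.card_filter, Finset.sum_product]
          exact Finset.sum_congr rfl fun x _ => by
            simp only [degIn, Finset.card_filter]
            all_goals exact Finset.sum_congr rfl fun y _ => by congr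
      _ ≤ (n - 1 - 2) * (Nr u).card := heg
  have hEGb : ∀ u, (PairB u).card ≤ (n - 1 - 2) * (Nb u).card := by
    intro u
    have hnp : ¬ HasPathOn (fun a b => B a b) (Nb u) (n - 1) := by
      apply hblue u
      intro x hx
      exact (Finset.mem_filter.mp hx).2
    have heg := erdosGallai hBs hBi (show 2 ≤ n - 1 by omega) (Nb u) hnp
    calc (PairB u).card = ∑ x ∈ Nb u, degIn B (Nb u) x := by
          rw [hPairBdef, Finset.card_filter, Finset.sum_product]
          exact Finset.sum_congr rfl fun x _ => by
            simp only [degIn, Finset.card_filter]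
            all_goals exact Finset.sum_congr rfl fun y _ => by congr
      _ ≤ (n - 1 - 2) * (Nb u).card := heg
  -- triple counting
  set Pd : V → V → V → Prop := fun u x y => u ≠ x ∧ u ≠ y ∧ x ≠ y with hPd
  have hT : (tset Pd).card = N * ((N - 1) * (N - 1) - (N - 1)) := by
    rw [tset_card]
    have hper : ∀ u : V, cnt Pd u = (N - 1) * (N - 1) - (N - 1) := by
      intro u
      calc cnt Pd u = ((Finset.univ.erase u).offDiag).card :=
            card_eq_of_mem_iff (fun q => by
              simp only [Finset.mem_filter, Finset.mem_univ, true_and, Finset.mem_offDiag,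
                Finset.mem_erase, and_true, hPd]
              constructor
              · rintro ⟨h1, h2, h3⟩
                exact ⟨fun he => h1 he.symm, fun he => h2 he.symm, h3⟩
              · rintro ⟨h1, h2, h3⟩
                exact ⟨fun he => h1 he.symm, fun he => h2 he.symm, h3⟩)
        _ = (N - 1) * (N - 1) - (N - 1) := by
            rw [Finset.offDiag_card, Finset.card_erase_of_mem (Finset.mem_univ u),
              Finset.card_univ, ← hNdef]
    rw [Finset.sum_congr rfl (fun u _ => hper u), Finset.sum_const, Finset.card_univ,
      ← hNdef, smul_eq_mul]
  have hne : ∀ a b : V, R a b → a ≠ b := fun a b h he => hRi b (he ▸ h)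
  -- split into monochromatic and non-monochromatic triples
  have hsplitT := tset_split Pd (fun u x y => (R u x ↔ R u y) ∧ (R u y ↔ R x y))
  -- rotations
  have hYX : (tset fun u x y => Pd u x y ∧ ¬(R x y ↔ R x u)).card
      = (tset fun u x y => Pd u x y ∧ ¬(R u x ↔ R u y)).card := by
    apply Finset.card_bij (fun t _ => (t.2.1, t.2.2, t.1))
    · intro t ht
      simp only [tset, Finset.mem_filter, Finset.mem_univ, true_and, hPd] at ht ⊢
      obtain ⟨⟨hd1, hd2, hd3⟩, hp⟩ := ht
      exact ⟨⟨hd3, fun he => hd1 he.symm, fun he => hd2 he.symm⟩, hp⟩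
    · intro t1 h1 t2 h2 he
      obtain ⟨a1, b1, c1⟩ := t1
      obtain ⟨a2, b2, c2⟩ := t2
      simp only [Prod.mk.injEq] at he ⊢
      exact ⟨he.2.2, he.1, he.2.1⟩
    · intro s hs
      refine ⟨(s.2.2, s.1, s.2.1), ?_, rfl⟩
      simp only [tset, Finset.mem_filter, Finset.mem_univ, true_and, hPd] at hs ⊢
      obtain ⟨⟨hd1, hd2, hd3⟩, hp⟩ := hs
      exact ⟨⟨fun he => hd2 he.symm, fun he => hd3 he.symm, hd1⟩, hp⟩
  have hZX : (tset fun u x y => Pd u x y ∧ ¬(R y u ↔ R y x)).card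
      = (tset fun u x y => Pd u x y ∧ ¬(R u x ↔ R u y)).card := by
    apply Finset.card_bij (fun t _ => (t.2.2, t.1, t.2.1))
    · intro t ht
      simp only [tset, Finset.mem_filter, Finset.mem_univ, true_and, hPd] at ht ⊢
      obtain ⟨⟨hd1, hd2, hd3⟩, hp⟩ := ht
      exact ⟨⟨fun he => hd2 he.symm, fun he => hd3 he.symm, hd1⟩, hp⟩
    · intro t1 h1 t2 h2 he
      obtain ⟨a1, b1, c1⟩ := t1
      obtain ⟨a2, b2, c2⟩ := t2
      simp only [Prod.mk.injEq] at he ⊢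
      exact ⟨he.2.1, he.2.2, he.1⟩
    · intro s hs
      refine ⟨(s.2.1, s.2.2, s.1), ?_, rfl⟩
      simp only [tset, Finset.mem_filter, Finset.mem_univ, true_and, hPd] at hs ⊢
      obtain ⟨⟨hd1, hd2, hd3⟩, hp⟩ := hs
      exact ⟨⟨hd3, fun he => hd1 he.symm, fun he => hd2 he.symm⟩, hp⟩
  -- double counting of non-monochromatic triples
  have hdouble : 2 * (tset fun u x y => Pd u x y ∧ ¬((R u x ↔ R u y) ∧ (R u y ↔ R x y))).card
      = (tset fun u x y => Pd u x y ∧ ¬(R u x ↔ R u y)).card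
        + (tset fun u x y => Pd u x y ∧ ¬(R x y ↔ R x u)).card
        + (tset fun u x y => Pd u x y ∧ ¬(R y u ↔ R y x)).card := by
    simp only [tset, Finset.card_filter, Finset.mul_sum, ← Finset.sum_add_distrib]
    refine Finset.sum_congr rfl fun t _ => ?_
    have s1 : R t.2.1 t.1 ↔ R t.1 t.2.1 := ⟨fun h => hRs h, fun h => hRs h⟩
    have s2 : R t.2.2 t.1 ↔ R t.1 t.2.2 := ⟨fun h => hRs h, fun h => hRs h⟩
    have s3 : R t.2.2 t.2.1 ↔ R t.2.1 t.2.2 := ⟨fun h => hRs h, fun h => hRs h⟩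
    by_cases hd : Pd t.1 t.2.1 t.2.2
    · have hdT : Pd t.1 t.2.1 t.2.2 = True := eq_true hd
      by_cases ha : R t.1 t.2.1 <;> by_cases hb : R t.1 t.2.2 <;>
        by_cases hc : R t.2.1 t.2.2 <;>
        simp [hdT, ha, hb, hc, s1, s2, s3]
    · have hdF : Pd t.1 t.2.1 t.2.2 = False := eq_false hd
      simp [hdF]
  -- counting X by apex
  have hXcnt : (tset fun u x y => Pd u x y ∧ ¬(R u x ↔ R u y)).card
      = ∑ u : V, 2 * ((Nr u).card * (Nb u).card) := by
    rw [tset_card]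
    refine Finset.sum_congr rfl fun u _ => ?_
    have hdisj : Disjoint ((Nr u) ×ˢ (Nb u)) ((Nb u) ×ˢ (Nr u)) := by
      rw [Finset.disjoint_left]
      intro q hq1 hq2
      have h1 := (Finset.mem_product.mp hq1).1
      have h2 := (Finset.mem_product.mp hq2).1
      rw [hNrdef] at h1
      rw [hNbdef] at h2
      exact (Finset.mem_filter.mp h2).2.2 (Finset.mem_filter.mp h1).2
    calc cnt (fun u x y => Pd u x y ∧ ¬(R u x ↔ R u y)) u
        = ((Nr u ×ˢ Nb u) ∪ (Nb u ×ˢ Nr u)).card := by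
          apply card_eq_of_mem_iff
          intro q
          simp only [Finset.mem_filter, Finset.mem_univ, true_and, Finset.mem_union,
            Finset.mem_product, hPd, hNrdef, hNbdef, hBdef, hRdef]
          constructor
          · rintro ⟨⟨hd1, hd2, hd3⟩, hp⟩
            by_cases ha : C.Adj u q.1
            · have hb : ¬ C.Adj u q.2 := fun h => hp (iff_of_true ha h)
              exact Or.inl ⟨ha, hd2, hb⟩
            · have hb : C.Adj u q.2 := by
                by_contra h
                exact hp (iff_of_false ha h)
              exact Or.inr ⟨⟨hd1, ha⟩, hb⟩
          · rintro (⟨ha, hb1, hb2⟩ | ⟨⟨ha1, ha2⟩, hb⟩)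
            · exact ⟨⟨ha.ne, hb1, fun he => hb2 (he ▸ ha)⟩,
                fun hiff => hb2 (hiff.mp ha)⟩
            · exact ⟨⟨ha1, hb.ne, fun he => ha2 (he.symm ▸ hb)⟩,
                fun hiff => ha2 (hiff.mpr hb)⟩
      _ = 2 * ((Nr u).card * (Nb u).card) := by
          rw [Finset.card_union_of_disjoint hdisj, Finset.card_product, Finset.card_product]
          ring
  -- counting monochromatic triples by apex
  have hTmcnt : (tset fun u x y => Pd u x y ∧ ((R u x ↔ R u y) ∧ (R u y ↔ R x y))).card
      = ∑ u : V, ((PairR u).card + (PairB u).card) := by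
    rw [tset_card]
    refine Finset.sum_congr rfl fun u _ => ?_
    have hdisj : Disjoint (PairR u) (PairB u) := by
      rw [Finset.disjoint_left]
      intro q hq1 hq2
      rw [hPairRdef] at hq1
      rw [hPairBdef] at hq2
      have h1 := (Finset.mem_product.mp (Finset.mem_filter.mp hq1).1).1
      have h2 := (Finset.mem_product.mp (Finset.mem_filter.mp hq2).1).1
      rw [hNrdef] at h1
      rw [hNbdef] at h2
      exact (Finset.mem_filter.mp h2).2.2 (Finset.mem_filter.mp h1).2
    calc cnt (fun u x y => Pd u x y ∧ ((R u x ↔ R u y) ∧ (R u y ↔ R x y))) u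
        = (PairR u ∪ PairB u).card := by
          apply card_eq_of_mem_iff
          intro q
          simp only [Finset.mem_filter, Finset.mem_univ, true_and, Finset.mem_union,
            Finset.mem_product, hPd, hPairRdef, hPairBdef, hNrdef, hNbdef, hBdef, hRdef]
          constructor
          · rintro ⟨⟨hd1, hd2, hd3⟩, h1, h2⟩
            by_cases ha : C.Adj u q.1
            · have hb := h1.mp ha
              have hc := h2.mp hb
              exact Or.inl ⟨⟨ha, hb⟩, hc⟩
            · have hb : ¬ C.Adj u q.2 := fun h => ha (h1.mpr h)
              have hc : ¬ C.Adj q.1 q.2 := fun h => hb (h2.mpr h)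
              exact Or.inr ⟨⟨⟨hd1, ha⟩, hd2, hb⟩, hd3, hc⟩
          · rintro (⟨⟨ha, hb⟩, hc⟩ | ⟨⟨⟨ha1, ha2⟩, hb1, hb2⟩, hc1, hc2⟩)
            · exact ⟨⟨ha.ne, hb.ne, hc.ne⟩, iff_of_true ha hb, iff_of_true hb hc⟩
            · exact ⟨⟨ha1, hb1, hc1⟩, iff_of_false ha2 hb2, iff_of_false hb2 hc2⟩
      _ = (PairR u).card + (PairB u).card := Finset.card_union_of_disjoint hdisj
  -- put everything together
  have hMle : (tset fun u x y => Pd u x y ∧ ((R u x ↔ R u y) ∧ (R u y ↔ R x y))).card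
      ≤ (n - 1 - 2) * (N * (N - 1)) := by
    rw [hTmcnt]
    calc ∑ u : V, ((PairR u).card + (PairB u).card)
        ≤ ∑ _u : V, (n - 1 - 2) * (N - 1) := by
          apply Finset.sum_le_sum
          intro u _
          have h1 := hEGr u
          have h2 := hEGb u
          have h3 : (n - 1 - 2) * (Nr u).card + (n - 1 - 2) * (Nb u).card
              = (n - 1 - 2) * (N - 1) := by
            rw [← Nat.mul_add, hsum u]
          omega
      _ = N * ((n - 1 - 2) * (N - 1)) := by
          rw [Finset.sum_const, Finset.card_univ, ← hNdef, smul_eq_mul]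
      _ = (n - 1 - 2) * (N * (N - 1)) := by ring
  have hSle : ∑ u : V, (Nr u).card * (Nb u).card ≤ N * ((2 * n - 4) * (2 * n - 4 + 1)) := by
    calc ∑ u : V, (Nr u).card * (Nb u).card
        ≤ ∑ _u : V, (2 * n - 4) * (2 * n - 4 + 1) := by
          apply Finset.sum_le_sum
          intro u _
          apply prodBound
          have := hsum u
          omega
      _ = N * ((2 * n - 4) * (2 * n - 4 + 1)) := by
          rw [Finset.sum_const, Finset.card_univ, ← hNdef, smul_eq_mul]
  have hXsum : (tset fun u x y => Pd u x y ∧ ¬(R u x ↔ R u y)).card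
      = 2 * ∑ u : V, (Nr u).card * (Nb u).card := by
    rw [hXcnt, Finset.mul_sum]
  -- final contradiction
  have hNcval : (tset fun u x y => Pd u x y ∧ ¬((R u x ↔ R u y) ∧ (R u y ↔ R x y))).card
      = 3 * ∑ u : V, (Nr u).card * (Nb u).card := by
    omega
  have hfin : N * ((N - 1) * (N - 1) - (N - 1))
      ≤ (n - 1 - 2) * (N * (N - 1)) + 3 * (N * ((2 * n - 4) * (2 * n - 4 + 1))) := by
    omega
  obtain ⟨a, rfl⟩ : ∃ a, n = a + 5 := ⟨n - 5, by omega⟩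
  have e0 : N = 4 * a + 14 := by omega
  rw [e0] at hfin
  rw [show 4 * a + 14 - 1 = 4 * a + 13 from by omega] at hfin
  rw [show (4 * a + 13) * (4 * a + 13) - (4 * a + 13) = (4 * a + 13) * (4 * a + 12) from by
    have : (4 * a + 13) * (4 * a + 13) = (4 * a + 13) * (4 * a + 12) + (4 * a + 13) := by ring
    omega] at hfin
  rw [show a + 5 - 1 - 2 = a + 2 from by omega] at hfin
  rw [show 2 * (a + 5) - 4 = 2 * a + 6 from by omega] at hfin
  have hid : (4 * a + 14) * ((4 * a + 13) * (4 * a + 12))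
      = (a + 2) * ((4 * a + 14) * (4 * a + 13))
        + 3 * ((4 * a + 14) * ((2 * a + 6) * (2 * a + 6 + 1)))
        + (4 * a + 14) * (a + 4) := by ring
  have hpos : 0 < (4 * a + 14) * (a + 4) := Nat.mul_pos (by omega) (by omega)
  omega

lemma contains_kipas_of_path {V : Type*} [Fintype V] [DecidableEq V] (C : SimpleGraph V)
    {n : ℕ} (hn : 5 ≤ n) (u : V) (S : Finset V) (hS : ∀ x ∈ S, C.Adj u x)
    (hp : HasPathOn (fun a b => C.Adj a b) S (n - 1)) : Contains C (kipas n) := by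
  obtain ⟨p, hmem, hinj, hadj⟩ := hp
  refine ⟨⟨Sum.elim (fun _ => u) (fun i : Fin (n - 1) => p i.val), ?_⟩, ?_⟩
  · intro a b hab
    cases a with
    | inl a0 =>
      cases b with
      | inl b0 =>
        exact absurd (by rw [Subsingleton.elim a0 b0]) hab.ne
      | inr j =>
        exact hS _ (hmem _ j.isLt)
    | inr i =>
      cases b with
      | inl b0 =>
        exact (hS _ (hmem _ i.isLt)).symm
      | inr j =>
        have hadj' : (SimpleGraph.pathGraph (n - 1)).Adj i j := by
          have h := hab
          simp only [kipas, graphJoin, SimpleGraph.fromRel_adj] at h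
          rcases h.2 with h' | h'
          · exact h'
          · exact h'.symm
        rw [SimpleGraph.pathGraph_adj] at hadj'
        rcases hadj' with h' | h'
        · have hb : (i : ℕ) + 1 < n - 1 := by
            have := j.isLt
            omega
          have := hadj i.val hb
          rwa [h'] at this
        · have hb : (j : ℕ) + 1 < n - 1 := by
            have := i.isLt
            omega
          have := hadj j.val hb
          rw [h'] at this
          exact this.symm
  · intro a b hab
    cases a with
    | inl a0 =>
      cases b with
      | inl b0 => rw [Subsingleton.elim a0 b0]
      | inr j =>
        exact absurd hab (hS _ (hmem _ j.isLt)).ne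
    | inr i =>
      cases b with
      | inl b0 =>
        exact absurd hab.symm (hS _ (hmem _ i.isLt)).ne
      | inr j =>
        have hij : (i : ℕ) = (j : ℕ) := by
          by_contra hne
          rcases Nat.lt_or_ge i.val j.val with h | h
          · exact hinj i.val j.val h j.isLt hab
          · exact hinj j.val i.val (by omega) i.isLt hab.symm
        exact congrArg Sum.inr (Fin.ext hij)

theorem stmt_11 (n : ℕ) (hn : 5 ≤ n) :
    ramseyNumber (kipas n) (kipas n) ≤ 4 * n - 6 := by
  apply Nat.sInf_le
  intro C
  by_contra hcon
  push_neg at hcon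
  obtain ⟨hA, hB⟩ := hcon
  refine noMono C hn (by simp) ?_ ?_
  · intro u S hS hpath
    exact hA (contains_kipas_of_path C hn u S hS hpath)
  · intro u S hS hpath
    apply hB
    apply contains_kipas_of_path Cᶜ hn u S
    · intro x hx
      rw [SimpleGraph.compl_adj]
      exact hS x hx
    · obtain ⟨p, h1, h2, h3⟩ := hpath
      refine ⟨p, h1, h2, fun i hi => ?_⟩
      show Cᶜ.Adj (p i) (p (i + 1))
      rw [SimpleGraph.compl_adj]
      exact h3 i hi
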